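/- Suppose b : ℝ^d → ℝ^d is uniformly bounded and satisfies the two-sided Osgood condition: |⟨b(x) − b(y), x − y⟩| ≤ C ‖x − y‖ ρ(‖x − y‖) for all x, y, where C ≥ 0 and ρ : [0,∞) → [0,∞) is continuous, non-decreasing with ρ(0) = 0. Then b is continuous. -/

import Mathlib

open Set Filter Topology

theorem osgood_bounded_implies_continuous
    (d : ℕ) (b : EuclideanSpace ℝ (Fin d) → EuclideanSpace ℝ (Fin d))
    (M : ℝ) (hbd : ∀ x, ‖b x‖ ≤ M)
    (C : ℝ) (hC : 0 ≤ C)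
    (ρ : ℝ → ℝ) (hρc : ContinuousOn ρ (Ici 0)) (hρm : MonotoneOn ρ (Ici 0))
    (hρ0 : ρ 0 = 0) (hρpos : ∀ s ∈ Ici (0:ℝ), 0 ≤ ρ s)
    (hosgood : ∀ x y, |(inner ℝ (b x - b y) (x - y) : ℝ)| ≤ C * ‖x - y‖ * ρ ‖x - y‖) :
    Continuous b := by
  -- Key step: any sequential limit point of b along a sequence tending to x equals b x.
  have key : ∀ (x : EuclideanSpace ℝ (Fin d)) (u : ℕ → EuclideanSpace ℝ (Fin d))
      (L : EuclideanSpace ℝ (Fin d)),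
      Tendsto u atTop (𝓝 x) → Tendsto (fun n => b (u n)) atTop (𝓝 L) → L = b x := by
    intro x u L hu hbL
    -- pass to the limit in the Osgood inequality
    have hlim : ∀ y, |(inner ℝ (L - b y) (x - y) : ℝ)| ≤ C * ‖x - y‖ * ρ ‖x - y‖ := by
      intro y
      have h1 : Tendsto (fun n => |(inner ℝ (b (u n) - b y) (u n - y) : ℝ)|) atTop
          (𝓝 |(inner ℝ (L - b y) (x - y) : ℝ)|) :=
        ((hbL.sub tendsto_const_nhds).inner (hu.sub tendsto_const_nhds)).abs
      have hn : Tendsto (fun n => ‖u n - y‖) atTop (𝓝 ‖x - y‖) :=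
        (hu.sub tendsto_const_nhds).norm
      have hρt : Tendsto (fun n => ρ ‖u n - y‖) atTop (𝓝 (ρ ‖x - y‖)) := by
        refine (hρc _ (norm_nonneg (x - y))).tendsto.comp ?_
        exact tendsto_nhdsWithin_of_tendsto_nhds_of_eventually_within _ hn
          (Eventually.of_forall fun n => norm_nonneg _)
      have h2 : Tendsto (fun n => C * ‖u n - y‖ * ρ ‖u n - y‖) atTop
          (𝓝 (C * ‖x - y‖ * ρ ‖x - y‖)) :=
        (tendsto_const_nhds.mul hn).mul hρt
      exact le_of_tendsto_of_tendsto' h1 h2 fun n => hosgood (u n) y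
    set z := L - b x with hzdef
    -- for every s > 0 : ‖z‖^2 ≤ 2 * (C * ‖z‖ * ρ (s * ‖z‖))
    have hkey : ∀ s : ℝ, 0 < s → ‖z‖ ^ 2 ≤ 2 * (C * ‖z‖ * ρ (s * ‖z‖)) := by
      intro s hs
      set y := x - s • z with hy
      have hxy : x - y = s • z := by rw [hy]; abel
      have hnorm : ‖s • z‖ = s * ‖z‖ := by
        rw [norm_smul, Real.norm_of_nonneg hs.le]
      have h1 := hlim y
      have h2 := hosgood x y
      rw [hxy, hnorm] at h1 h2
      have hzz : (inner ℝ z (s • z) : ℝ) = s * ‖z‖ ^ 2 := by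
        rw [real_inner_smul_right, real_inner_self_eq_norm_sq]
      have hsplit : (inner ℝ z (s • z) : ℝ)
          = (inner ℝ (L - b y) (s • z) : ℝ) - (inner ℝ (b x - b y) (s • z) : ℝ) := by
        rw [← inner_sub_left]
        congr 1
        rw [hzdef]; abel
      have habs : |(inner ℝ z (s • z) : ℝ)| ≤ 2 * (C * (s * ‖z‖) * ρ (s * ‖z‖)) := by
        rw [hsplit]
        calc |(inner ℝ (L - b y) (s • z) : ℝ) - (inner ℝ (b x - b y) (s • z) : ℝ)|
            ≤ |(inner ℝ (L - b y) (s • z) : ℝ)| + |(inner ℝ (b x - b y) (s • z) : ℝ)| :=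
              abs_sub _ _
          _ ≤ C * (s * ‖z‖) * ρ (s * ‖z‖) + C * (s * ‖z‖) * ρ (s * ‖z‖) := add_le_add h1 h2
          _ = 2 * (C * (s * ‖z‖) * ρ (s * ‖z‖)) := by ring
      rw [hzz] at habs
      have h3 : s * ‖z‖ ^ 2 ≤ 2 * (C * (s * ‖z‖) * ρ (s * ‖z‖)) :=
        (le_abs_self _).trans habs
      have h4 : s * ‖z‖ ^ 2 ≤ s * (2 * (C * ‖z‖ * ρ (s * ‖z‖))) := by
        calc s * ‖z‖ ^ 2 ≤ 2 * (C * (s * ‖z‖) * ρ (s * ‖z‖)) := h3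
          _ = s * (2 * (C * ‖z‖ * ρ (s * ‖z‖))) := by ring
      exact le_of_mul_le_mul_left (by linarith [h4]) hs
    -- let s → 0⁺
    have hz0 : ‖z‖ ^ 2 ≤ 0 := by
      have htend : Tendsto (fun s : ℝ => 2 * (C * ‖z‖ * ρ (s * ‖z‖))) (𝓝[>] (0:ℝ)) (𝓝 0) := by
        have h1 : Tendsto (fun s : ℝ => s * ‖z‖) (𝓝[>] (0:ℝ)) (𝓝[Ici 0] 0) := by
          apply tendsto_nhdsWithin_of_tendsto_nhds_of_eventually_within
          · have := (tendsto_id.mono_left (nhdsWithin_le_nhds :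
              (𝓝[>] (0:ℝ)) ≤ 𝓝 0)).mul_const ‖z‖
            simpa using this
          · filter_upwards [self_mem_nhdsWithin] with s hs
            exact mul_nonneg (le_of_lt hs) (norm_nonneg _)
        have h2 : Tendsto (fun s : ℝ => ρ (s * ‖z‖)) (𝓝[>] (0:ℝ)) (𝓝 0) := by
          have := (hρc 0 self_mem_Ici).tendsto.comp h1
          simpa [hρ0, Function.comp_def] using this
        have := (tendsto_const_nhds (x := (2 * (C * ‖z‖) : ℝ))).mul h2
        simpa [mul_assoc] using this
      refine ge_of_tendsto htend ?_
      filter_upwards [self_mem_nhdsWithin] with s hs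
      exact hkey s hs
    have : ‖z‖ = 0 := by nlinarith [norm_nonneg z, sq_nonneg ‖z‖]
    have : z = 0 := norm_eq_zero.mp this
    rw [hzdef] at this
    exact sub_eq_zero.mp this
  -- now prove continuity via sequences
  rw [continuous_iff_seqContinuous]
  intro u x hu
  apply tendsto_of_subseq_tendsto
  intro ns hns
  have hM : 0 ≤ M := le_trans (norm_nonneg _) (hbd 0)
  have hmem : ∀ n, b (u (ns n)) ∈ Metric.closedBall (0 : EuclideanSpace ℝ (Fin d)) M :=
    fun n => by simpa [Metric.mem_closedBall] using hbd (u (ns n))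
  obtain ⟨L, -, φ, hφ, hLt⟩ :=
    (isCompact_closedBall (0 : EuclideanSpace ℝ (Fin d)) M).tendsto_subseq hmem
  have huns : Tendsto (fun n => u (ns (φ n))) atTop (𝓝 x) :=
    hu.comp (hns.comp hφ.tendsto_atTop)
  have hLb : L = b x := key x (fun n => u (ns (φ n))) L huns hLt
  exact ⟨φ, by rw [← hLb]; exact hLt⟩
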